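/- Let p ≥ 0. Let ∗ be the anti-involution of J(R) with E_{k,l}(r)^∗ = E_{−l,−k}(r̄), let N = Σ_{i∈ℤ} E_{i,i+1}(1) ∈ J(R) and I the identity matrix, and let Φ̃_p : R^{⊗(p+1)} → J(R)^{⊗(p+2)} be the k-linear map determined on pure tensors by Φ̃_p(r_0⊗r_1⊗⋯⊗r_p) = r_0 I ⊗ ( Σ_{l=0}^{p} (−1)^l r_1 I⊗⋯⊗r_l I⊗N⊗r_{l+1} I⊗⋯⊗r_p I ). Let y_p^R be the operator on R^{⊗(p+1)} given by y_p^R(r_0⊗⋯⊗r_p) = (−1)^{p(p+1)/2} r̄_0⊗r̄_p⊗r̄_{p−1}⊗⋯⊗r̄_1, and let y_{p+1}^{J(R)} be the operator on J(R)^{⊗(p+2)} given by y_{p+1}^{J(R)}(m_0⊗⋯⊗m_{p+1}) = (−1)^{(p+1)(p+2)/2} m_0^∗⊗m_{p+1}^∗⊗m_p^∗⊗⋯⊗m_1^∗. Then y_{p+1}^{J(R)} ∘ Φ̃_p = −Φ̃_p ∘ y_p^R. -/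

import Mathlib

open scoped TensorProduct

/-!
STATEMENT 10: `y_{p+1}^{J(R)} ∘ Φ̃_p = − Φ̃_p ∘ y_p^R`, where
`Φ̃_p(r_0⊗⋯⊗r_p) = r_0 I ⊗ (Σ_{l=0}^p (−1)^l r_1 I⊗⋯⊗r_l I⊗N⊗r_{l+1} I⊗⋯⊗r_p I)`.
-/

def HasBand {R : Type*} [Zero R] (A : ℤ → ℤ → R) (N : ℤ) : Prop :=
  ∀ i j : ℤ, N < |i - j| → A i j = 0

def IsJacobi {R : Type*} [Zero R] (A : ℤ → ℤ → R) : Prop := ∃ N : ℤ, HasBand A N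

/-- `J(R)` as a `k`-submodule of the space of all ℤ×ℤ matrices over `R`. -/
def jacobiSubmodule (k R : Type*) [Field k] [Ring R] [Algebra k R] :
    Submodule k (ℤ → ℤ → R) where
  carrier := {A | IsJacobi A}
  add_mem' := by
    rintro A B ⟨N, hN⟩ ⟨M, hM⟩
    exact ⟨max N M, fun i j h => by
      have : A i j + B i j = 0 := by
        rw [hN i j ((le_max_left N M).trans_lt h), hM i j ((le_max_right N M).trans_lt h),
          add_zero]
      simpa using this⟩
  zero_mem' := ⟨0, fun i j _ => rfl⟩
  smul_mem' := by
    rintro c A ⟨N, hN⟩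
    exact ⟨N, fun i j h => by
      have : c • A i j = 0 := by rw [hN i j h, smul_zero]
      simpa using this⟩

/-- The elements of `J(R)`. -/
abbrev JMat (k R : Type*) [Field k] [Ring R] [Algebra k R] : Type _ :=
  ↥(jacobiSubmodule k R)

/-- The diagonal matrix `r I ∈ J(R)`. -/
def diagJ (k : Type*) {R : Type*} [Field k] [Ring R] [Algebra k R] (r : R) : JMat k R :=
  ⟨fun i j => if i = j then r else 0, ⟨0, fun i j h => by
    have hij : i ≠ j := by
      intro hij
      subst hij
      simp at h
    simp [hij]⟩⟩

/-- The matrix `N = Σ_{i∈ℤ} E_{i,i+1}(1) ∈ J(R)`. -/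
def NmatJ (k : Type*) {R : Type*} [Field k] [Ring R] [Algebra k R] : JMat k R :=
  ⟨fun i j => if j = i + 1 then 1 else 0, ⟨1, fun i j h => by
    have hij : j ≠ i + 1 := by
      intro hij
      subst hij
      have : i - (i + 1) = -1 := by ring
      rw [this] at h
      simp at h
    simp [hij]⟩⟩

/-- The anti-involution `∗` of `J(R)`: `(X^∗)_{i,j} = bar (X_{−j,−i})`. -/
def starJ (k : Type*) {R : Type*} [Field k] [Ring R] [Algebra k R]
    (bar : R →ₗ[k] R) (X : JMat k R) : JMat k R :=
  ⟨fun i j => bar (X.1 (-j) (-i)), by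
    obtain ⟨N, hN⟩ := X.2
    exact ⟨N, fun i j h => by
      show bar (X.1 (-j) (-i)) = 0
      have hji : (-j) - (-i) = i - j := by ring
      rw [hN (-j) (-i) (by rw [hji]; exact h), map_zero]⟩⟩

/-- The `l`-th pure tensor appearing in the definition of `Φ̃_p`:
`r_0 I ⊗ r_1 I ⊗ ⋯ ⊗ r_l I ⊗ N ⊗ r_{l+1} I ⊗ ⋯ ⊗ r_p I`. -/
def gfam (k : Type*) {R : Type*} [Field k] [Ring R] [Algebra k R] (p : ℕ)
    (r : ℕ → R) (l : ℕ) : Fin (p + 2) → JMat k R :=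
  fun i =>
    if (i : ℕ) = 0 then diagJ k (r 0)
    else if (i : ℕ) ≤ l then diagJ k (r i)
    else if (i : ℕ) = l + 1 then NmatJ k
    else diagJ k (r ((i : ℕ) - 1))

open Fin.NatCast

lemma starJ_diagJ (k : Type*) {R : Type*} [Field k] [Ring R] [Algebra k R]
    (bar : R →ₗ[k] R) (r : R) : starJ k bar (diagJ k r) = diagJ k (bar r) := by
  apply Subtype.ext
  funext i j
  show bar (if -j = -i then r else 0) = if i = j then bar r else 0
  by_cases h : i = j
  · subst h; simp
  · rw [if_neg (by omega), if_neg h, map_zero]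

lemma starJ_NmatJ (k : Type*) {R : Type*} [Field k] [Ring R] [Algebra k R]
    (bar : R →ₗ[k] R) (h1 : bar 1 = 1) : starJ k bar (NmatJ k) = NmatJ k := by
  apply Subtype.ext
  funext i j
  show bar (if -i = -j + 1 then (1:R) else 0) = if j = i + 1 then 1 else 0
  by_cases h : j = i + 1
  · rw [if_pos (by omega), if_pos h, h1]
  · rw [if_neg (by omega), if_neg h, map_zero]

lemma cast_eq_neg_cast (p a b : ℕ) (ha : a ≤ p) (hb : 1 ≤ b) (hb2 : b ≤ p)
    (hab : a + b = p + 1) : (↑a : Fin (p+1)) = -↑b := by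
  apply Fin.ext
  rw [Fin.coe_neg, Fin.val_cast_of_lt (show a < p + 1 by omega),
    Fin.val_cast_of_lt (show b < p + 1 by omega), Nat.mod_eq_of_lt (by omega)]
  omega

lemma gfam_star (k : Type*) {R : Type*} [Field k] [Ring R] [Algebra k R]
    (bar : R →ₗ[k] R) (hbar1 : bar 1 = 1) (p l : ℕ) (hl : l ≤ p)
    (r : Fin (p+1) → R) (i : Fin (p+2)) :
    starJ k bar (gfam k p (fun n => r ↑n) l (-i)) =
      gfam k p (fun n => bar (r (-(↑n : Fin (p+1))))) (p - l) i := by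
  by_cases h0 : (i : ℕ) = 0
  · have hi : i = 0 := Fin.ext (by simpa using h0)
    subst hi
    rw [neg_zero]
    simp [gfam, starJ_diagJ]
  · have hi2 : (i : ℕ) < p + 2 := i.isLt
    have ha : ((-i : Fin (p+2)) : ℕ) = p + 2 - (i:ℕ) := by
      rw [Fin.coe_neg, Nat.mod_eq_of_lt (by omega)]
    simp only [gfam, ha]
    split_ifs <;>
      first
      | omega
      | exact starJ_NmatJ k bar hbar1
      | (rw [starJ_diagJ]
         exact congrArg (diagJ k) (congrArg bar (congrArg r
           (cast_eq_neg_cast p _ _ (by omega) (by omega) (by omega) (by omega)))))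

theorem statement10 (k R : Type*) [Field k] [CharZero k] [Ring R] [Algebra k R]
    (bar : R →ₗ[k] R) (hbar_mul : ∀ r s : R, bar (r * s) = bar s * bar r)
    (hbar_inv : ∀ r : R, bar (bar r) = r) (p : ℕ)
    (Φ : (⨂[k] _ : Fin (p + 1), R) →ₗ[k] (⨂[k] _ : Fin (p + 2), JMat k R))
    -- `Φ̃_p(r_0⊗⋯⊗r_p) = r_0 I ⊗ (Σ_{l=0}^p (−1)^l r_1 I⊗⋯⊗r_l I⊗N⊗r_{l+1} I⊗⋯⊗r_p I)`
    (hΦ : ∀ r : ℕ → R,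
      Φ (PiTensorProduct.tprod k fun i : Fin (p + 1) => r i) =
        ∑ l ∈ Finset.range (p + 1),
          ((-1 : k) ^ l) • PiTensorProduct.tprod k (gfam k p r l))
    (yR : Module.End k (⨂[k] _ : Fin (p + 1), R))
    -- `y_p^R(r_0⊗⋯⊗r_p) = (−1)^{p(p+1)/2} r̄_0⊗r̄_p⊗⋯⊗r̄_1`
    (hyR : ∀ r : Fin (p + 1) → R,
      yR (PiTensorProduct.tprod k r) =
        ((-1 : k) ^ (p * (p + 1) / 2)) • PiTensorProduct.tprod k (fun i => bar (r (-i))))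
    (yJ : Module.End k (⨂[k] _ : Fin (p + 2), JMat k R))
    -- `y_{p+1}^{J(R)}(m_0⊗⋯⊗m_{p+1}) = (−1)^{(p+1)(p+2)/2} m_0^∗⊗m_{p+1}^∗⊗⋯⊗m_1^∗`
    (hyJ : ∀ m : Fin (p + 2) → JMat k R,
      yJ (PiTensorProduct.tprod k m) =
        ((-1 : k) ^ ((p + 1) * (p + 2) / 2)) •
          PiTensorProduct.tprod k (fun i => starJ k bar (m (-i)))) :
    ∀ t : ⨂[k] _ : Fin (p + 1), R, yJ (Φ t) = -(Φ (yR t)) := by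
  have hbar1 : bar 1 = 1 := by
    have h := hbar_mul (bar 1) 1
    rw [mul_one, hbar_inv] at h
    simpa [hbar_inv] using h.symm
  have key : ∀ r : Fin (p + 1) → R,
      yJ (Φ (PiTensorProduct.tprod k r)) = -(Φ (yR (PiTensorProduct.tprod k r))) := by
    intro r
    have e1 : Φ (PiTensorProduct.tprod k r) =
        ∑ l ∈ Finset.range (p + 1),
          ((-1 : k) ^ l) • PiTensorProduct.tprod k (gfam k p (fun n => r ↑n) l) := by
      have h := hΦ (fun n => r ↑n)
      rw [show (fun i : Fin (p + 1) => r ↑(i : ℕ)) = r from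
        funext fun i => by simp [Fin.cast_val_eq_self]] at h
      exact h
    have e2 : Φ (PiTensorProduct.tprod k (fun i => bar (r (-i)))) =
        ∑ l ∈ Finset.range (p + 1),
          ((-1 : k) ^ l) •
            PiTensorProduct.tprod k (gfam k p (fun n => bar (r (-(↑n : Fin (p + 1))))) l) := by
      have h := hΦ (fun n => bar (r (-(↑n : Fin (p + 1)))))
      rw [show (fun i : Fin (p + 1) => bar (r (-(↑(i : ℕ) : Fin (p + 1))))) =
          (fun i => bar (r (-i))) from
        funext fun i => by simp [Fin.cast_val_eq_self]] at h
      exact h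
    have sign : ∀ l, l ≤ p →
        ((-1 : k) ^ ((p + 1) * (p + 2) / 2)) * (-1 : k) ^ (p - l) =
          -(((-1 : k) ^ (p * (p + 1) / 2)) * (-1 : k) ^ l) := by
      intro l hl
      have hdiv : (p + 1) * (p + 2) / 2 = p * (p + 1) / 2 + (p + 1) := by
        have h : (p + 1) * (p + 2) = p * (p + 1) + (p + 1) * 2 := by ring
        rw [h, Nat.add_mul_div_right _ _ (by norm_num : (0:ℕ) < 2)]
      have h2 : p + 1 + (p - l) = 1 + l + 2 * (p - l) := by omega
      rw [hdiv, pow_add, mul_assoc, ← pow_add, h2]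
      rw [pow_add, pow_add, pow_mul, neg_one_sq, one_pow, pow_one]
      ring
    calc yJ (Φ (PiTensorProduct.tprod k r))
        = ∑ l ∈ Finset.range (p + 1),
            (((-1 : k) ^ ((p + 1) * (p + 2) / 2)) * (-1 : k) ^ l) •
              PiTensorProduct.tprod k
                (gfam k p (fun n => bar (r (-(↑n : Fin (p + 1))))) (p - l)) := by
          rw [e1, map_sum]
          refine Finset.sum_congr rfl fun l hl => ?_
          rw [map_smul, hyJ, smul_smul, mul_comm]
          congr 1
          rw [show (fun i => starJ k bar (gfam k p (fun n => r ↑n) l (-i))) =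
              gfam k p (fun n => bar (r (-(↑n : Fin (p + 1))))) (p - l) from
            funext fun i => gfam_star k bar hbar1 p l
              (Nat.lt_succ_iff.mp (Finset.mem_range.mp hl)) r i]
      _ = ∑ l ∈ Finset.range (p + 1),
            (((-1 : k) ^ ((p + 1) * (p + 2) / 2)) * (-1 : k) ^ (p - l)) •
              PiTensorProduct.tprod k
                (gfam k p (fun n => bar (r (-(↑n : Fin (p + 1))))) l) := by
          rw [← Finset.sum_range_reflect
            (fun m => (((-1 : k) ^ ((p + 1) * (p + 2) / 2)) * (-1 : k) ^ (p - m)) •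
              PiTensorProduct.tprod k
                (gfam k p (fun n => bar (r (-(↑n : Fin (p + 1))))) m)) (p + 1)]
          refine Finset.sum_congr rfl fun l hl => ?_
          have hlp : l ≤ p := Nat.lt_succ_iff.mp (Finset.mem_range.mp hl)
          rw [show p + 1 - 1 - l = p - l from by omega, show p - (p - l) = l from by omega]
      _ = ∑ l ∈ Finset.range (p + 1),
            (-(((-1 : k) ^ (p * (p + 1) / 2)) * (-1 : k) ^ l)) •
              PiTensorProduct.tprod k
                (gfam k p (fun n => bar (r (-(↑n : Fin (p + 1))))) l) := by
          refine Finset.sum_congr rfl fun l hl => ?_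
          rw [sign l (Nat.lt_succ_iff.mp (Finset.mem_range.mp hl))]
      _ = -(Φ (yR (PiTensorProduct.tprod k r))) := by
          rw [hyR, map_smul, e2, Finset.smul_sum]
          have h1 : ∀ l ∈ Finset.range (p + 1),
              (-(((-1 : k) ^ (p * (p + 1) / 2)) * (-1 : k) ^ l)) •
                  PiTensorProduct.tprod k
                    (gfam k p (fun n => bar (r (-(↑n : Fin (p + 1))))) l) =
                -(((-1 : k) ^ (p * (p + 1) / 2)) • ((-1 : k) ^ l •
                  PiTensorProduct.tprod k
                    (gfam k p (fun n => bar (r (-(↑n : Fin (p + 1))))) l))) :=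
            fun l _ => by
              rw [smul_smul]
              exact neg_smul (M := ⨂[k] _ : Fin (p + 2), JMat k R)
                (((-1 : k) ^ (p * (p + 1) / 2)) * (-1 : k) ^ l)
                (PiTensorProduct.tprod k (gfam k p (fun n => bar (r (-(↑n : Fin (p + 1))))) l))
          rw [Finset.sum_congr rfl h1, Finset.sum_neg_distrib]
  intro t
  induction t using PiTensorProduct.induction_on with
  | smul_tprod c r => simp [map_smul, key r]
  | add x y hx hy =>
    rw [map_add, map_add, map_add, map_add, hx, hy]
    exact (neg_add _ _).symm
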